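/- arXiv:1207.1149 — 2 statements merged into one kernel-verified Lean document; each statement's English description precedes it below -/
import Mathlib

section
/- Let A ∈ Z^{m×n} be a matrix of rank r and let Δ(A) denote the maximum absolute value of a subdeterminant of A. Then every element v of the Graver basis of A satisfies ||v||_1 ≤ (n - r)(r + 1)Δ(A). -/
/-- Two integer vectors lie in the same orthant (are sign-compatible). -/
def SameOrthant {n : Type*} (u v : n → ℤ) : Prop := ∀ i, 0 ≤ u i * v i

/-- `v` is an element of the Graver basis of the integer matrix `E`:
`v` is a nonzero integer vector in the kernel of `E` that cannot be written as a
sum `v = v' + v''` of two nonzero integer kernel vectors lying in the same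
orthant as `v`. -/
def IsGraver {m n : Type*} [Fintype n] (E : Matrix m n ℤ) (v : n → ℤ) : Prop :=
  v ≠ 0 ∧ E.mulVec v = 0 ∧
    ∀ v' v'' : n → ℤ, v' ≠ 0 → v'' ≠ 0 → E.mulVec v' = 0 → E.mulVec v'' = 0 →
      SameOrthant v v' → SameOrthant v v'' → v ≠ v' + v''


open Matrix Finset Submodule

open Matrix Finset

/-- Cofactor vector of a `t × (t+1)` matrix is annihilated by every row. -/
lemma cofactor_mulVec_eq_zero {t : ℕ} {R : Type*} [CommRing R]
    (M : Matrix (Fin t) (Fin (t+1)) R) (i : Fin t) :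
    ∑ j : Fin (t+1), M i j * ((-1 : R) ^ (j : ℕ) * (M.submatrix id j.succAbove).det) = 0 := by
  classical
  set Q : Matrix (Fin (t+1)) (Fin (t+1)) R := Matrix.of (Fin.cons (M i) M) with hQ
  have hrow0 : Q 0 = M i := rfl
  have hrows : ∀ a : Fin t, Q a.succ = M a := fun a => rfl
  have hdet : Q.det = 0 := by
    apply Matrix.det_zero_of_row_eq (i := 0) (j := i.succ) (Fin.succ_ne_zero i).symm
    rw [hrow0, hrows]
  have hexp := Matrix.det_succ_row_zero Q
  rw [hdet] at hexp
  rw [eq_comm] at hexp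
  calc ∑ j : Fin (t+1), M i j * ((-1 : R) ^ (j : ℕ) * (M.submatrix id j.succAbove).det)
      = ∑ j : Fin (t+1), (-1 : R) ^ (j : ℕ) * Q 0 j * (Q.submatrix Fin.succ j.succAbove).det := by
        apply Finset.sum_congr rfl
        intro j _
        have : Q.submatrix Fin.succ j.succAbove = M.submatrix id j.succAbove := by
          ext a b; rfl
        rw [this, hrow0]; ring
    _ = 0 := hexp.symm ▸ hexp
open Matrix Finset Submodule

/-- Coordinatewise cast `ℤ → ℚ` as a `ℤ`-linear map. -/
def castLM (m : ℕ) : (Fin m → ℤ) →ₗ[ℤ] (Fin m → ℚ) where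
  toFun v := fun i => (v i : ℚ)
  map_add' u v := by funext i; simp
  map_smul' c v := by funext i; simp

lemma castLM_injective (m : ℕ) : Function.Injective (castLM m) := by
  intro u v h
  funext i
  have : ((u i : ℚ)) = (v i : ℚ) := congrFun h i
  exact_mod_cast this

lemma linearIndependent_cast_iff {m : ℕ} {ι : Type*} (v : ι → (Fin m → ℤ)) :
    LinearIndependent ℤ v ↔ LinearIndependent ℚ (fun i => castLM m (v i)) := by
  rw [← LinearIndependent.iff_fractionRing ℤ ℚ]
  constructor
  · intro h
    exact h.map' (castLM m) (LinearMap.ker_eq_bot.mpr (castLM_injective m))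
  · intro h
    exact h.of_comp (castLM m)

lemma rank_map_ratCast {m n : ℕ} (A : Matrix (Fin m) (Fin n) ℤ) :
    (A.map (Int.cast : ℤ → ℚ)).rank = A.rank := by
  classical
  set F := A.map (Int.cast : ℤ → ℚ) with hF
  have hcol : ∀ j, Fᵀ j = castLM m (Aᵀ j) := by
    intro j; funext i; rfl
  rw [Matrix.rank_eq_finrank_span_cols, Matrix.rank_eq_finrank_span_cols]
  unfold Matrix.col
  set S : Submodule ℤ (Fin m → ℤ) := span ℤ (Set.range Aᵀ) with hS
  set W : Submodule ℚ (Fin m → ℚ) := span ℚ (Set.range Fᵀ) with hW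
  have hsub : ∀ x ∈ S, castLM m x ∈ W := by
    intro x hx
    have h1 : S.map (castLM m) ≤ W.restrictScalars ℤ := by
      rw [hS, Submodule.map_span]
      apply span_le.mpr
      rintro - ⟨-, ⟨j, rfl⟩, rfl⟩
      rw [← hcol j]
      exact subset_span ⟨j, rfl⟩
    exact h1 ⟨x, hx, rfl⟩
  apply le_antisymm
  -- finrank W ≤ finrank S
  · obtain ⟨b, hbsub, hbspan, hbind⟩ := exists_linearIndependent ℚ (Set.range Fᵀ)
    have hbfin : b.Finite := Set.Finite.subset (Set.finite_range Fᵀ) hbsub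
    have : Fintype b := hbfin.fintype
    rw [hW, ← hbspan]
    rw [finrank_span_set_eq_card hbind]
    -- pick integer preimages
    have hpre : ∀ x : b, ∃ j : Fin n, castLM m (Aᵀ j) = (x : Fin m → ℚ) := by
      rintro ⟨x, hx⟩
      obtain ⟨j, hj⟩ := hbsub hx
      exact ⟨j, by rw [← hcol j, hj]⟩
    choose g hg using hpre
    set v : b → (Fin m → ℤ) := fun x => Aᵀ (g x) with hv
    have hind : LinearIndependent ℤ v := by
      rw [linearIndependent_cast_iff]
      have : (fun x : b => castLM m (v x)) = fun x : b => (x : Fin m → ℚ) := by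
        funext x; rw [hv]; exact hg x
      rw [this]
      exact hbind
    have hmem : ∀ x : b, v x ∈ S := fun x => subset_span ⟨g x, rfl⟩
    have h1 : span ℤ (Set.range v) ≤ S := span_le.mpr (Set.range_subset_iff.mpr hmem)
    have h2 := Submodule.finrank_mono h1
    rw [finrank_span_eq_card hind] at h2
    rw [Set.toFinset_card]
    exact h2
  -- finrank S ≤ finrank W
  · have : Module.Finite ℤ S := inferInstance
    have : Module.Free ℤ S := inferInstance
    set b := Module.Free.chooseBasis ℤ S with hb
    have hcard : Fintype.card (Module.Free.ChooseBasisIndex ℤ S) = Module.finrank ℤ S :=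
      (Module.finrank_eq_card_chooseBasisIndex ℤ S).symm
    rw [← hcard]
    set u : Module.Free.ChooseBasisIndex ℤ S → (Fin m → ℚ) :=
      fun i => castLM m ((b i : Fin m → ℤ)) with hu
    have huind : LinearIndependent ℚ u := by
      rw [← linearIndependent_cast_iff]
      exact b.linearIndependent.map' S.subtype (Submodule.ker_subtype S)
    have humem : ∀ i, u i ∈ W := fun i => hsub _ (b i).2
    have h1 : span ℚ (Set.range u) ≤ W := span_le.mpr (Set.range_subset_iff.mpr humem)
    have h2 := Submodule.finrank_mono h1
    rwa [finrank_span_eq_card huind] at h2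
open Matrix Finset Submodule

variable {m n : ℕ}

/-- support of a rational vector as a finset -/
def suppF (u : Fin n → ℚ) : Finset (Fin n) := Finset.univ.filter (fun j => u j ≠ 0)

lemma mem_suppF {u : Fin n → ℚ} {j : Fin n} : j ∈ suppF u ↔ u j ≠ 0 := by
  simp [suppF]

lemma mulVec_cast (A : Matrix (Fin m) (Fin n) ℤ) (x : Fin n → ℤ) (i : Fin m) :
    (A.map (Int.cast : ℤ → ℚ)).mulVec (fun j => (x j : ℚ)) i = ((A.mulVec x i : ℤ) : ℚ) := by
  simp [Matrix.mulVec, dotProduct, Matrix.map]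

lemma mulVec_cast_eq_zero {A : Matrix (Fin m) (Fin n) ℤ} {x : Fin n → ℤ} :
    A.mulVec x = 0 ↔ (A.map (Int.cast : ℤ → ℚ)).mulVec (fun j => (x j : ℚ)) = 0 := by
  constructor
  · intro h; funext i; rw [mulVec_cast, h]; simp
  · intro h; funext i
    have := congrFun h i
    rw [mulVec_cast, Pi.zero_apply] at this
    have h2 : A.mulVec x i = 0 := by exact_mod_cast this
    rw [h2]; rfl

/-- Kernel vectors supported inside the support of a support-minimal kernel vector
are rational multiples of it. -/
lemma ker_multiple {F : Matrix (Fin m) (Fin n) ℚ} {c : Fin n → ℚ}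
    (hck : F.mulVec c = 0)
    (hmin : ∀ x : Fin n → ℚ, F.mulVec x = 0 → (∀ j, c j = 0 → x j = 0) → x ≠ 0 →
      ∀ j, c j ≠ 0 → x j ≠ 0)
    (x : Fin n → ℚ) (hxk : F.mulVec x = 0) (hsupp : ∀ j, c j = 0 → x j = 0) :
    ∃ α : ℚ, x = α • c := by
  by_cases hx0 : x = 0
  · exact ⟨0, by simp [hx0]⟩
  · obtain ⟨j0, hj0⟩ : ∃ j0, x j0 ≠ 0 := by
      by_contra h
      push_neg at h
      exact hx0 (funext h)
    have hcj0 : c j0 ≠ 0 := fun h => hj0 (hsupp j0 h)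
    set α := x j0 / c j0 with hα
    refine ⟨α, ?_⟩
    set y := x - α • c with hy
    have hyk : F.mulVec y = 0 := by
      rw [hy, Matrix.mulVec_sub, Matrix.mulVec_smul, hxk, hck]; simp
    have hysupp : ∀ j, c j = 0 → y j = 0 := by
      intro j hj
      simp [hy, hj, hsupp j hj]
    have hyj0 : y j0 = 0 := by
      show x j0 - (x j0 / c j0) * c j0 = 0
      field_simp
      ring
    have hy0 : y = 0 := by
      by_contra h
      exact (hmin y hyk hysupp h j0 hcj0) hyj0
    exact sub_eq_zero.mp hy0

/-- Existence of a support-minimal nonzero kernel vector inside the support of `u`. -/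
lemma exists_minimal_kernel {F : Matrix (Fin m) (Fin n) ℚ} (u : Fin n → ℚ)
    (hu0 : u ≠ 0) (huk : F.mulVec u = 0) :
    ∃ c : Fin n → ℚ, c ≠ 0 ∧ F.mulVec c = 0 ∧ (∀ j, u j = 0 → c j = 0) ∧
      (∀ x : Fin n → ℚ, F.mulVec x = 0 → (∀ j, c j = 0 → x j = 0) → x ≠ 0 →
        ∀ j, c j ≠ 0 → x j ≠ 0) := by
  classical
  set P : ℕ → Prop := fun k => ∃ x : Fin n → ℚ, x ≠ 0 ∧ F.mulVec x = 0 ∧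
      (∀ j, u j = 0 → x j = 0) ∧ (suppF x).card = k with hP
  have hex : ∃ k, P k := ⟨(suppF u).card, u, hu0, huk, fun j h => h, rfl⟩
  obtain ⟨c, hc0, hck, hcsupp, hccard⟩ := Nat.find_spec hex
  refine ⟨c, hc0, hck, hcsupp, ?_⟩
  intro x hxk hxsupp hx0 j hcj
  -- supp x ⊆ supp c and minimality of card forces equality
  have hsub : suppF x ⊆ suppF c := by
    intro j' hj'
    rw [mem_suppF] at *
    intro h
    exact hj' (hxsupp j' h)
  have hxcard : Nat.find hex ≤ (suppF x).card := by
    apply Nat.find_le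
    exact ⟨x, hx0, hxk, fun j' h => hxsupp j' (hcsupp j' h), rfl⟩
  have heq : suppF x = suppF c := by
    apply Finset.eq_of_subset_of_card_le hsub
    rw [hccard]; exact hxcard
  have : j ∈ suppF c := mem_suppF.mpr hcj
  rw [← heq] at this
  exact mem_suppF.mp this

lemma det_intCast {k : ℕ} (B : Matrix (Fin k) (Fin k) ℤ) :
    ((B.det : ℤ) : ℚ) = (B.map (Int.cast : ℤ → ℚ)).det := by
  have h := RingHom.map_det (Int.castRingHom ℚ) B
  rw [RingHom.mapMatrix_apply] at h
  exact h

lemma one_le_Delta {m n : ℕ} {A : Matrix (Fin m) (Fin n) ℤ} {Δ : ℤ}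
    (hΔ : ∀ (k : ℕ) (f : Fin k ↪ Fin m) (g : Fin k ↪ Fin n), |(A.submatrix f g).det| ≤ Δ) :
    1 ≤ Δ := by
  have := hΔ 0 (Function.Embedding.ofIsEmpty) (Function.Embedding.ofIsEmpty)
  rwa [Matrix.det_fin_zero, abs_one] at this

lemma circuit_norm_bound {m n : ℕ} (A : Matrix (Fin m) (Fin n) ℤ) (r : ℕ) (hr : A.rank = r)
    (Δ : ℤ) (hΔ : ∀ (k : ℕ) (f : Fin k ↪ Fin m) (g : Fin k ↪ Fin n), |(A.submatrix f g).det| ≤ Δ)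
    (c : Fin n → ℚ) (hc0 : c ≠ 0)
    (hck : (A.map (Int.cast : ℤ → ℚ)).mulVec c = 0)
    (hmin : ∀ x : Fin n → ℚ, (A.map (Int.cast : ℤ → ℚ)).mulVec x = 0 →
      (∀ j, c j = 0 → x j = 0) → x ≠ 0 → ∀ j, c j ≠ 0 → x j ≠ 0) :
    ∃ (w : Fin n → ℤ) (α : ℚ), α ≠ 0 ∧ (∀ j, (w j : ℚ) = α * c j) ∧
      ∑ j, |w j| ≤ ((r : ℤ) + 1) * Δ := by
  classical
  set F := A.map (Int.cast : ℤ → ℚ) with hF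
  set S := suppF c with hS
  set s := S.card with hs
  obtain ⟨j0, hj0⟩ : ∃ j0, c j0 ≠ 0 := by
    by_contra h; push_neg at h; exact hc0 (funext h)
  have hj0S : j0 ∈ S := mem_suppF.mpr hj0
  set e : Fin s → Fin n := fun k => ((S.equivFin.symm k) : Fin n) with he
  have he_inj : Function.Injective e := by
    intro k1 k2 h
    have := Subtype.ext (a1 := S.equivFin.symm k1) (a2 := S.equivFin.symm k2) h
    exact S.equivFin.symm.injective this
  have he_mem : ∀ k, e k ∈ S := fun k => (S.equivFin.symm k).2
  have he_inv : ∀ (j : Fin n) (h : j ∈ S), e (S.equivFin ⟨j, h⟩) = j := by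
    intro j h
    show ((S.equivFin.symm (S.equivFin ⟨j, h⟩)) : Fin n) = j
    rw [Equiv.symm_apply_apply]
  have he_inv2 : ∀ (k : Fin s) (h : e k ∈ S), S.equivFin ⟨e k, h⟩ = k := by
    intro k h
    have : (⟨e k, h⟩ : {j // j ∈ S}) = S.equivFin.symm k := Subtype.ext rfl
    rw [this, Equiv.apply_symm_apply]
  have hsum : ∀ (M : Type) (_ : AddCommMonoid M) (g : Fin n → M),
      ∑ k : Fin s, g (e k) = ∑ j ∈ S, g j := by
    intro M _ g
    rw [← Finset.sum_attach S (fun j => g j)]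
    exact Fintype.sum_equiv S.equivFin.symm _ _ (fun k => rfl)
  -- extension of vectors on Fin s to Fin n
  set ext : (Fin s → ℚ) → (Fin n → ℚ) :=
    fun x j => if h : j ∈ S then x (S.equivFin ⟨j, h⟩) else 0 with hext
  have hext_e : ∀ x k, ext x (e k) = x k := by
    intro x k
    simp only [hext]
    rw [dif_pos (he_mem k), he_inv2 k (he_mem k)]
  have hext_supp : ∀ x j, c j = 0 → ext x j = 0 := by
    intro x j hj
    have : j ∉ S := fun h => (mem_suppF.mp h) hj
    simp only [hext]
    rw [dif_neg this]
  -- the column-restricted matrix N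
  set N : Matrix (Fin m) (Fin s) ℚ := F.submatrix id e with hN
  have hNmul : ∀ (x : Fin s → ℚ), N.mulVec x = F.mulVec (ext x) := by
    intro x; funext i
    show ∑ k : Fin s, N i k * x k = ∑ j : Fin n, F i j * ext x j
    have h1 : ∑ j : Fin n, F i j * ext x j = ∑ j ∈ S, F i j * ext x j := by
      symm
      apply Finset.sum_subset (Finset.subset_univ S)
      intro j _ hj
      have hcj : c j = 0 := by
        by_contra h; exact hj (mem_suppF.mpr h)
      rw [hext_supp x j hcj, mul_zero]
    rw [h1, ← hsum ℚ inferInstance (fun j => F i j * ext x j)]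
    apply Finset.sum_congr rfl
    intro k _
    rw [hext_e]
    rfl
  -- c restricted to S
  set cS : Fin s → ℚ := fun k => c (e k) with hcS
  have hcS_ne : cS ≠ 0 := by
    intro h
    have hk := congrFun h (S.equivFin ⟨j0, hj0S⟩)
    rw [hcS] at hk
    simp only at hk
    rw [he_inv j0 hj0S] at hk
    exact hj0 hk
  have hextcS : ext cS = c := by
    funext j
    by_cases h : j ∈ S
    · simp only [hext]
      rw [dif_pos h]
      show c (e (S.equivFin ⟨j, h⟩)) = c j
      rw [he_inv j h]
    · have hcj : c j = 0 := by
        by_contra hc; exact h (mem_suppF.mpr hc)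
      simp only [hext]
      rw [dif_neg h, hcj]
  have hcSker : N.mulVec cS = 0 := by rw [hNmul, hextcS, hck]
  -- kernel of N is spanned by cS
  have hker : LinearMap.ker N.mulVecLin = Submodule.span ℚ {cS} := by
    apply le_antisymm
    · intro x hx
      rw [LinearMap.mem_ker, Matrix.mulVecLin_apply] at hx
      obtain ⟨α, hα⟩ := ker_multiple hck hmin (ext x)
        (by rw [← hNmul]; exact hx) (fun j hj => hext_supp x j hj)
      have hxα : x = α • cS := by
        funext k
        have := congrFun hα (e k)
        rw [hext_e] at this
        rw [this]
        rfl
      rw [Submodule.mem_span_singleton]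
      exact ⟨α, hxα.symm⟩
    · rw [Submodule.span_le, Set.singleton_subset_iff, SetLike.mem_coe, LinearMap.mem_ker,
        Matrix.mulVecLin_apply]
      exact hcSker
  -- rank-nullity for N
  have hnt : N.rank + 1 = s := by
    have h1 := LinearMap.finrank_range_add_finrank_ker N.mulVecLin
    rw [hker, finrank_span_singleton hcS_ne, Module.finrank_pi ℚ, Fintype.card_fin] at h1
    exact h1
  set t := N.rank with ht
  have hst : s = t + 1 := hnt.symm
  -- t ≤ r
  have htr : t ≤ r := by
    have h1 : N.rank ≤ F.rank := by
      rw [Matrix.rank_eq_finrank_span_cols, Matrix.rank_eq_finrank_span_cols]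
      apply Submodule.finrank_mono
      rw [Submodule.span_le]
      rintro - ⟨k, rfl⟩
      exact subset_span ⟨e k, rfl⟩
    rw [hF, rank_map_ratCast, hr] at h1
    exact h1
  -- pick a basis of the row space from the rows
  obtain ⟨b, hbsub, hbspan, hbind⟩ := exists_linearIndependent ℚ (Set.range N)
  have hbfin : Fintype b := (Set.Finite.subset (Set.finite_range N) hbsub).fintype
  have hbcard : Fintype.card b = t := by
    have h1 : Module.finrank ℚ (span ℚ b) = b.toFinset.card := finrank_span_set_eq_card hbind
    rw [hbspan, show Set.range N = Set.range N.row from rfl, ← Matrix.rank_eq_finrank_span_row, Set.toFinset_card] at h1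
    exact h1.symm
  have hρ : ∀ x : b, ∃ i : Fin m, N i = (x : Fin s → ℚ) := fun x => hbsub x.2
  choose ρ hρspec using hρ
  set eb : b ≃ Fin t := Fintype.equivFinOfCardEq hbcard with heb
  set rowpick : Fin t → Fin m := fun i => ρ (eb.symm i) with hrowpick
  have hrowvec : ∀ i : Fin t, N (rowpick i) = ((eb.symm i : b) : Fin s → ℚ) := by
    intro i
    exact hρspec (eb.symm i)
  have hrow_inj : Function.Injective rowpick := by
    intro i1 i2 h
    have h1 : ((eb.symm i1 : b) : Fin s → ℚ) = ((eb.symm i2 : b) : Fin s → ℚ) := by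
      rw [← hrowvec i1, ← hrowvec i2, h]
    have h2 : eb.symm i1 = eb.symm i2 := Subtype.ext h1
    exact eb.symm.injective h2
  -- the square-ish matrix M
  set ec : Fin (t+1) → Fin n := fun k => e (finCongr hst.symm k) with hec
  have hec_inj : Function.Injective ec := by
    intro k1 k2 h
    exact (finCongr hst.symm).injective (he_inj h)
  set M : Matrix (Fin t) (Fin (t+1)) ℚ := fun i k => F (rowpick i) (ec k) with hM
  -- integer cofactor vector
  set w0 : Fin (t+1) → ℤ :=
    fun k => (-1)^(k : ℕ) * (A.submatrix rowpick (fun l : Fin t => ec (k.succAbove l))).det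
    with hw0
  have hMsub : ∀ k : Fin (t+1), M.submatrix id k.succAbove =
      (A.submatrix rowpick (fun l : Fin t => ec (k.succAbove l))).map (Int.cast : ℤ → ℚ) := by
    intro k; ext i l; rfl
  have hw0cast : ∀ k, ((w0 k : ℚ)) = (-1)^(k:ℕ) * (M.submatrix id k.succAbove).det := by
    intro k
    rw [hMsub k, ← det_intCast]
    simp only [hw0]
    push_cast
    ring
  have hcof : ∀ i : Fin t, ∑ k : Fin (t+1), M i k * (w0 k : ℚ) = 0 := by
    intro i
    have hc := cofactor_mulVec_eq_zero M i
    calc ∑ k, M i k * (w0 k : ℚ)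
        = ∑ k : Fin (t+1), M i k * ((-1:ℚ)^(k:ℕ) * (M.submatrix id k.succAbove).det) := by
          apply Finset.sum_congr rfl; intro k _; rw [hw0cast]
      _ = 0 := hc
  -- the lifted cofactor vector
  set xh : Fin s → ℚ := fun k => (w0 (finCongr hst k) : ℚ) with hxh
  set φ : (Fin s → ℚ) →ₗ[ℚ] ℚ :=
    { toFun := fun y => ∑ k, y k * xh k
      map_add' := by intro y z; simp [add_mul, Finset.sum_add_distrib]
      map_smul' := by intro a y; simp [Finset.mul_sum, mul_assoc] } with hφ
  have hφrows : ∀ i : Fin t, φ (N (rowpick i)) = 0 := by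
    intro i
    show ∑ k : Fin s, N (rowpick i) k * xh k = 0
    rw [← Equiv.sum_comp (finCongr hst.symm) (fun k => N (rowpick i) k * xh k)]
    rw [← hcof i]
    apply Finset.sum_congr rfl
    intro k _
    have h1 : N (rowpick i) (finCongr hst.symm k) = M i k := rfl
    have h2 : xh (finCongr hst.symm k) = (w0 k : ℚ) := by
      simp [hxh]
    rw [h1, h2]
  have hφall : ∀ i : Fin m, φ (N i) = 0 := by
    intro i
    have h1 : N i ∈ span ℚ (Set.range N) := subset_span ⟨i, rfl⟩
    rw [← hbspan] at h1
    have h2 : span ℚ b ≤ LinearMap.ker φ := by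
      rw [Submodule.span_le]
      intro x hx
      have h3 : N (ρ ⟨x, hx⟩) = x := hρspec ⟨x, hx⟩
      have h4 : rowpick (eb ⟨x, hx⟩) = ρ ⟨x, hx⟩ := by
        show ρ (eb.symm (eb ⟨x, hx⟩)) = ρ ⟨x, hx⟩
        rw [Equiv.symm_apply_apply]
      show φ x = 0
      rw [← h3, ← h4]
      exact hφrows _
    exact h2 h1
  have hNxh : N.mulVec xh = 0 := by
    funext i
    rw [Pi.zero_apply]
    exact hφall i
  have hxhker : xh ∈ LinearMap.ker N.mulVecLin := by
    rw [LinearMap.mem_ker, Matrix.mulVecLin_apply]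
    exact hNxh
  rw [hker] at hxhker
  obtain ⟨β, hβ⟩ := Submodule.mem_span_singleton.mp hxhker
  -- rows of M are linearly independent
  have hMrows : LinearIndependent ℚ (fun i : Fin t => M i) := by
    have hg : LinearIndependent ℚ (fun i : Fin t => ((eb.symm i : b) : Fin s → ℚ)) :=
      hbind.comp eb.symm eb.symm.injective
    set L := LinearEquiv.funCongrLeft ℚ ℚ (finCongr hst.symm) with hL
    have hgM : ∀ i : Fin t, M i = L ((eb.symm i : b) : Fin s → ℚ) := by
      intro i
      funext k
      show M i k = ((eb.symm i : b) : Fin s → ℚ) (finCongr hst.symm k)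
      rw [← hrowvec i]
      rfl
    rw [show (fun i : Fin t => M i) = fun i => L ((eb.symm i : b) : Fin s → ℚ) from funext hgM]
    exact hg.map' L.toLinearMap (LinearEquiv.ker L)
  have hMrank : M.rank = t := by
    rw [Matrix.rank_eq_finrank_span_row, show Set.range M.row = Set.range (fun i : Fin t => M i) from rfl,
      finrank_span_eq_card hMrows, Fintype.card_fin]
  -- columns of M: pick a basis of the column space
  obtain ⟨b', hb'sub, hb'span, hb'ind⟩ := exists_linearIndependent ℚ (Set.range Mᵀ)
  have hb'fin : Fintype b' := (Set.Finite.subset (Set.finite_range Mᵀ) hb'sub).fintype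
  have hb'card : Fintype.card b' = t := by
    have h1 : Module.finrank ℚ (span ℚ b') = b'.toFinset.card := finrank_span_set_eq_card hb'ind
    rw [hb'span, show Set.range Mᵀ = Set.range M.col from rfl, ← Matrix.rank_eq_finrank_span_cols, hMrank, Set.toFinset_card] at h1
    exact h1.symm
  have hσ : ∀ x : b', ∃ k : Fin (t+1), Mᵀ k = (x : Fin t → ℚ) := fun x => hb'sub x.2
  choose σ hσspec using hσ
  have hσinj : Function.Injective σ := by
    intro x1 x2 h
    apply Subtype.ext
    rw [← hσspec x1, ← hσspec x2, h]
  -- there is a column index missing from the chosen columns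
  set J : Finset (Fin (t+1)) := Finset.univ.image σ with hJdef
  have hJcard : J.card = t := by
    rw [hJdef, Finset.card_image_of_injective _ hσinj, Finset.card_univ, hb'card]
  have hJcompl : (Jᶜ : Finset (Fin (t+1))).Nonempty := by
    rw [← Finset.card_pos, Finset.card_compl, hJcard, Fintype.card_fin]
    omega
  obtain ⟨kstar, hkstar⟩ := hJcompl
  have hkstarJ : kstar ∉ J := Finset.mem_compl.mp hkstar
  have hJ : J = Finset.univ.erase kstar := by
    apply Finset.eq_of_subset_of_card_le
    · intro k hk
      apply Finset.mem_erase.mpr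
      exact ⟨fun h => hkstarJ (h ▸ hk), Finset.mem_univ k⟩
    · rw [Finset.card_erase_of_mem (Finset.mem_univ kstar), Finset.card_univ, Fintype.card_fin,
        hJcard]
      omega
  have hτ : ∀ l : Fin t, ∃ x : b', σ x = kstar.succAbove l := by
    intro l
    have h1 : kstar.succAbove l ∈ J := by
      rw [hJ]
      exact Finset.mem_erase.mpr ⟨(Fin.succAbove_ne kstar l), Finset.mem_univ _⟩
    rcases Finset.mem_image.mp h1 with ⟨x, _, hx⟩
    exact ⟨x, hx⟩
  choose τ hτspec using hτ
  have hτinj : Function.Injective τ := by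
    intro l1 l2 h
    have : kstar.succAbove l1 = kstar.succAbove l2 := by
      rw [← hτspec l1, ← hτspec l2, h]
    exact kstar.succAbove_right_injective this
  have hQcols : ∀ l : Fin t, Mᵀ (kstar.succAbove l) = (τ l : Fin t → ℚ) := by
    intro l
    rw [← hτspec l, hσspec]
  have hQind : LinearIndependent ℚ (fun l : Fin t => Mᵀ (kstar.succAbove l)) := by
    rw [show (fun l : Fin t => Mᵀ (kstar.succAbove l))
        = (fun x : b' => (x : Fin t → ℚ)) ∘ τ from funext hQcols]
    exact hb'ind.comp τ hτinj
  set Q : Matrix (Fin t) (Fin t) ℚ := M.submatrix id kstar.succAbove with hQ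
  have hQdet : Q.det ≠ 0 := by
    intro h
    obtain ⟨v, hv0, hvQ⟩ := (Matrix.exists_mulVec_eq_zero_iff).mpr h
    apply hv0
    funext l
    rw [Pi.zero_apply]
    apply Fintype.linearIndependent_iff.mp hQind v _ l
    funext i
    have h1 : (∑ l : Fin t, v l • Mᵀ (kstar.succAbove l)) i
        = ∑ l : Fin t, Q i l * v l := by
      rw [Finset.sum_apply]
      apply Finset.sum_congr rfl
      intro l _
      show v l * Mᵀ (kstar.succAbove l) i = Q i l * v l
      rw [mul_comm]
      rfl
    rw [h1, Pi.zero_apply]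
    have := congrFun hvQ i
    rw [Pi.zero_apply] at this
    rw [← this]
    rfl
  have hw0kstar : w0 kstar ≠ 0 := by
    intro h
    simp only [hw0] at h
    have hdet0 : (A.submatrix rowpick (fun l : Fin t => ec (kstar.succAbove l))).det = 0 := by
      rcases mul_eq_zero.mp h with h1 | h1
      · exact absurd h1 (by positivity)
      · exact h1
    apply hQdet
    have : Q = (A.submatrix rowpick (fun l : Fin t => ec (kstar.succAbove l))).map
        (Int.cast : ℤ → ℚ) := hMsub kstar
    rw [this, ← det_intCast, hdet0]
    simp
  have hβ0 : β ≠ 0 := by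
    intro h
    rw [h, zero_smul] at hβ
    have h1 := congrFun hβ ((finCongr hst).symm kstar)
    rw [Pi.zero_apply] at h1
    simp only [hxh] at h1
    rw [show (finCongr hst) ((finCongr hst).symm kstar) = kstar from
      Equiv.apply_symm_apply _ _] at h1
    exact hw0kstar (by exact_mod_cast h1.symm)
  -- the integer circuit
  set w : Fin n → ℤ :=
    fun j => if h : j ∈ S then w0 (finCongr hst (S.equivFin ⟨j, h⟩)) else 0 with hw
  have hwmul : ∀ j, (w j : ℚ) = β * c j := by
    intro j
    by_cases h : j ∈ S
    · simp only [hw]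
      rw [dif_pos h]
      have h1 : ((w0 (finCongr hst (S.equivFin ⟨j, h⟩)) : ℚ)) = xh (S.equivFin ⟨j, h⟩) := rfl
      rw [h1, ← hβ]
      show β * cS (S.equivFin ⟨j, h⟩) = β * c j
      simp only [hcS]
      rw [he_inv j h]
    · have hcj : c j = 0 := by
        by_contra hc; exact h (mem_suppF.mpr hc)
      simp only [hw]
      rw [dif_neg h, hcj]
      simp
  refine ⟨w, β, hβ0, hwmul, ?_⟩
  -- the norm bound
  have hwe : ∀ k : Fin s, w (e k) = w0 (finCongr hst k) := by
    intro k
    simp only [hw]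
    rw [dif_pos (he_mem k), he_inv2 k (he_mem k)]
  have hwsum : ∑ j, |w j| = ∑ k : Fin (t+1), |w0 k| := by
    have h1 : ∑ j, |w j| = ∑ j ∈ S, |w j| := by
      symm
      apply Finset.sum_subset (Finset.subset_univ S)
      intro j _ hj
      simp only [hw]
      rw [dif_neg hj, abs_zero]
    rw [h1, ← hsum ℤ inferInstance (fun j => |w j|)]
    have h2 : ∑ k : Fin s, |w (e k)| = ∑ k : Fin s, |w0 (finCongr hst k)| := by
      apply Finset.sum_congr rfl
      intro k _
      rw [hwe]
    rw [h2]
    exact Equiv.sum_comp (finCongr hst) (fun k => |w0 k|)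
  rw [hwsum]
  have h1 : ∀ k : Fin (t+1), |w0 k| ≤ Δ := by
    intro k
    simp only [hw0]
    rw [abs_mul, abs_pow, abs_neg, abs_one, one_pow, one_mul]
    exact hΔ t ⟨rowpick, hrow_inj⟩
      ⟨fun l => ec (k.succAbove l), hec_inj.comp (Fin.succAbove_right_injective)⟩
  have hΔ1 : (1 : ℤ) ≤ Δ := one_le_Delta hΔ
  calc ∑ k : Fin (t+1), |w0 k| ≤ ∑ _k : Fin (t+1), Δ := Finset.sum_le_sum (fun k _ => h1 k)
    _ = ((t : ℤ)+1) * Δ := by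
        rw [Finset.sum_const, Finset.card_univ, Fintype.card_fin, nsmul_eq_mul]
        push_cast
        ring
    _ ≤ ((r : ℤ)+1) * Δ := by
        apply mul_le_mul_of_nonneg_right _ (by linarith)
        have : (t : ℤ) ≤ (r : ℤ) := by exact_mod_cast htr
        linarith

lemma sign_trans {a b c : ℚ} (h1 : 0 ≤ a * b) (h2 : 0 < b * c) : 0 ≤ a * c := by
  rcases lt_trichotomy b 0 with hb | hb | hb
  · have hc : c < 0 := by nlinarith
    have ha : a ≤ 0 := by nlinarith
    nlinarith
  · rw [hb, zero_mul] at h2; exact absurd h2 (lt_irrefl 0)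
  · have hc : 0 < c := by nlinarith
    have ha : 0 ≤ a := by nlinarith
    exact mul_nonneg ha hc.le

lemma exists_signcompat_circuit {m n : ℕ} (A : Matrix (Fin m) (Fin n) ℤ) (r : ℕ)
    (hr : A.rank = r) (Δ : ℤ)
    (hΔ : ∀ (k : ℕ) (f : Fin k ↪ Fin m) (g : Fin k ↪ Fin n), |(A.submatrix f g).det| ≤ Δ)
    (u : Fin n → ℚ) (hu0 : u ≠ 0) (huk : (A.map (Int.cast : ℤ → ℚ)).mulVec u = 0) :
    ∃ w : Fin n → ℤ, w ≠ 0 ∧ (∀ j, u j = 0 → w j = 0) ∧ (∀ j, 0 ≤ (w j : ℚ) * u j) ∧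
      A.mulVec w = 0 ∧ ∑ j, |w j| ≤ ((r : ℤ) + 1) * Δ := by
  classical
  suffices H : ∀ (N : ℕ) (u : Fin n → ℚ), (suppF u).card ≤ N → u ≠ 0 →
      (A.map (Int.cast : ℤ → ℚ)).mulVec u = 0 →
      ∃ w : Fin n → ℤ, w ≠ 0 ∧ (∀ j, u j = 0 → w j = 0) ∧ (∀ j, 0 ≤ (w j : ℚ) * u j) ∧
        A.mulVec w = 0 ∧ ∑ j, |w j| ≤ ((r : ℤ) + 1) * Δ by
    exact H (suppF u).card u le_rfl hu0 huk
  intro N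
  induction N with
  | zero =>
    intro u hcard hu0 huk
    exfalso
    apply hu0
    funext j
    rw [Pi.zero_apply]
    by_contra hj
    have : j ∈ suppF u := mem_suppF.mpr hj
    have := Finset.card_ne_zero_of_mem this
    omega
  | succ N ih =>
    intro u hcard hu0 huk
    obtain ⟨c, hc0, hck, hcsupp, hcmin⟩ := exists_minimal_kernel u hu0 huk
    obtain ⟨w, α, hα0, hwα, hwnorm⟩ := circuit_norm_bound A r hr Δ hΔ c hc0 hck hcmin
    have hwcast : (fun j => (w j : ℚ)) = α • c := by
      funext j; rw [hwα j]; rfl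
    have hwker : A.mulVec w = 0 := by
      rw [mulVec_cast_eq_zero (A := A), hwcast, Matrix.mulVec_smul, hck, smul_zero]
    have hwc : ∀ j, w j = 0 ↔ c j = 0 := by
      intro j
      constructor
      · intro h
        have := hwα j
        rw [h] at this
        simp only [Int.cast_zero] at this
        rcases mul_eq_zero.mp this.symm with h1 | h1
        · exact absurd h1 hα0
        · exact h1
      · intro h
        have := hwα j
        rw [h, mul_zero] at this
        exact_mod_cast this
    have hw0 : w ≠ 0 := by
      obtain ⟨j1, hj1⟩ : ∃ j1, c j1 ≠ 0 := by
        by_contra h; push_neg at h; exact hc0 (funext h)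
      intro h
      exact hj1 ((hwc j1).mp (congrFun h j1))
    have hwsupp : ∀ j, u j = 0 → w j = 0 := fun j hj => (hwc j).mpr (hcsupp j hj)
    by_cases hpos : ∀ j, 0 ≤ (w j : ℚ) * u j
    · exact ⟨w, hw0, hwsupp, hpos, hwker, hwnorm⟩
    by_cases hneg : ∀ j, 0 ≤ (-(w j) : ℚ) * u j
    · refine ⟨-w, neg_ne_zero.mpr hw0, fun j hj => by rw [Pi.neg_apply, hwsupp j hj, neg_zero],
        fun j => by push_cast; exact hneg j, by rw [Matrix.mulVec_neg, hwker, neg_zero], ?_⟩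
      calc ∑ j, |(-w) j| = ∑ j, |w j| := by
            apply Finset.sum_congr rfl; intro j _; rw [Pi.neg_apply, abs_neg]
        _ ≤ ((r : ℤ) + 1) * Δ := hwnorm
    -- mixed signs: subtract to reduce support
    push_neg at hpos hneg
    obtain ⟨j1, hj1⟩ := hpos
    obtain ⟨j2, hj2⟩ := hneg
    have hj2' : 0 < (w j2 : ℚ) * u j2 := by nlinarith
    set T : Finset (Fin n) := Finset.univ.filter (fun j => (w j : ℚ) * u j < 0) with hT
    have hTne : T.Nonempty := ⟨j1, by rw [hT, Finset.mem_filter]; exact ⟨Finset.mem_univ _, hj1⟩⟩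
    obtain ⟨jstar, hjstarT, hjmin⟩ := Finset.exists_min_image T (fun j => -(u j) / (w j : ℚ)) hTne
    have hjstar : (w jstar : ℚ) * u jstar < 0 := by
      have := Finset.mem_filter.mp hjstarT
      exact this.2
    have hwjstar : (w jstar : ℚ) ≠ 0 := by
      intro h; rw [h, zero_mul] at hjstar; exact absurd hjstar (lt_irrefl 0)
    set tst : ℚ := -(u jstar) / (w jstar : ℚ) with htst
    have htstpos : 0 < tst := by
      rw [htst]
      apply div_pos_iff.mpr
      rcases lt_trichotomy (w jstar : ℚ) 0 with h | h | h
      · right; constructor <;> nlinarith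
      · exact absurd h hwjstar
      · left; constructor <;> nlinarith
    set u' : Fin n → ℚ := fun j => u j + tst * (w j : ℚ) with hu'
    have hu'k : (A.map (Int.cast : ℤ → ℚ)).mulVec u' = 0 := by
      have : u' = u + tst • (fun j => (w j : ℚ)) := by
        funext j; simp [hu', smul_eq_mul]
      rw [this, Matrix.mulVec_add, Matrix.mulVec_smul, huk, hwcast, Matrix.mulVec_smul, hck]
      simp
    have hsupp' : ∀ j, u j = 0 → u' j = 0 := by
      intro j hj
      have : w j = 0 := hwsupp j hj
      simp [hu', hj, this]
    have hjstar0 : u' jstar = 0 := by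
      simp only [hu', htst]
      field_simp
      ring
    -- key sign property
    have hkey : ∀ j, u' j ≠ 0 → 0 < u' j * u j := by
      intro j hj
      by_cases hje : u j = 0
      · exact absurd (hsupp' j hje) hj
      rcases le_or_gt 0 ((w j : ℚ) * u j) with hwj | hwj
      · have : u' j * u j = u j * u j + tst * ((w j : ℚ) * u j) := by
          simp only [hu']; ring
        rw [this]
        have h1 : 0 < u j * u j := by rcases lt_or_gt_of_ne hje with h | h <;> nlinarith
        nlinarith
      · -- j ∈ T
        have hjT : j ∈ T := by rw [hT, Finset.mem_filter]; exact ⟨Finset.mem_univ _, hwj⟩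
        have hwj0 : (w j : ℚ) ≠ 0 := by
          intro h; rw [h, zero_mul] at hwj; exact absurd hwj (lt_irrefl 0)
        have hle : tst ≤ -(u j) / (w j : ℚ) := hjmin j hjT
        have h1 : 0 ≤ u' j * u j := by
          have h2 : u' j * u j = u j * u j + tst * ((w j : ℚ) * u j) := by
            simp only [hu']; ring
          rw [h2]
          have h3 : tst * ((w j : ℚ) * u j) ≥ (-(u j) / (w j : ℚ)) * ((w j : ℚ) * u j) :=
            mul_le_mul_of_nonpos_right hle hwj.le
          have h4 : (-(u j) / (w j : ℚ)) * ((w j : ℚ) * u j) = -(u j * u j) := by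
            field_simp
          nlinarith
        rcases h1.lt_or_eq with h | h
        · exact h
        · exfalso
          have : u' j = 0 ∨ u j = 0 := mul_eq_zero.mp h.symm
          rcases this with h5 | h5
          · exact hj h5
          · exact hje h5
    have hu'0 : u' ≠ 0 := by
      intro h
      have h1 : u' j2 = 0 := congrFun h j2
      have h2 : u' j2 * u j2 = u j2 * u j2 + tst * ((w j2 : ℚ) * u j2) := by
        simp only [hu']; ring
      rw [h1, zero_mul] at h2
      have hj2e : u j2 ≠ 0 := by
        intro h; rw [h, mul_zero] at hj2'; exact absurd hj2' (lt_irrefl 0)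
      nlinarith
    have hsubset : suppF u' ⊂ suppF u := by
      constructor
      · intro j hj
        rw [mem_suppF] at *
        intro h
        exact hj (hsupp' j h)
      · intro h
        have hjmem : jstar ∈ suppF u := by
          rw [mem_suppF]
          intro h2; rw [h2, mul_zero] at hjstar; exact absurd hjstar (lt_irrefl 0)
        have := h hjmem
        rw [mem_suppF] at this
        exact this hjstar0
    have hcard' : (suppF u').card ≤ N := by
      have := Finset.card_lt_card hsubset
      omega
    obtain ⟨w', hw'0, hw'supp, hw'sign, hw'ker, hw'norm⟩ := ih u' hcard' hu'0 hu'k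
    refine ⟨w', hw'0, fun j hj => hw'supp j (hsupp' j hj), ?_, hw'ker, hw'norm⟩
    intro j
    by_cases h : w' j = 0
    · rw [h]; simp
    · have hu'j : u' j ≠ 0 := by
        intro h2; exact h (hw'supp j h2)
      exact sign_trans (hw'sign j) (hkey j hu'j)

lemma graver_decomposition {m n : ℕ} (A : Matrix (Fin m) (Fin n) ℤ) (r : ℕ)
    (hr : A.rank = r) (Δ : ℤ)
    (hΔ : ∀ (k : ℕ) (f : Fin k ↪ Fin m) (g : Fin k ↪ Fin n), |(A.submatrix f g).det| ≤ Δ)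
    (u : Fin n → ℚ) (huk : (A.map (Int.cast : ℤ → ℚ)).mulVec u = 0) :
    ∃ (k : ℕ) (lam : Fin k → ℚ) (w : Fin k → Fin n → ℤ),
      (∀ i, 0 < lam i) ∧
      (∀ i, A.mulVec (w i) = 0) ∧
      (∀ i, ∑ j, |w i j| ≤ ((r : ℤ) + 1) * Δ) ∧
      (∀ i j, 0 ≤ (w i j : ℚ) * u j) ∧
      (∀ i j, u j = 0 → w i j = 0) ∧
      (∀ j, u j = ∑ i, lam i * (w i j : ℚ)) ∧
      LinearIndependent ℚ (fun i => fun j => (w i j : ℚ)) := by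
  classical
  suffices H : ∀ (N : ℕ) (u : Fin n → ℚ), (suppF u).card ≤ N →
      (A.map (Int.cast : ℤ → ℚ)).mulVec u = 0 →
      ∃ (k : ℕ) (lam : Fin k → ℚ) (w : Fin k → Fin n → ℤ),
      (∀ i, 0 < lam i) ∧
      (∀ i, A.mulVec (w i) = 0) ∧
      (∀ i, ∑ j, |w i j| ≤ ((r : ℤ) + 1) * Δ) ∧
      (∀ i j, 0 ≤ (w i j : ℚ) * u j) ∧
      (∀ i j, u j = 0 → w i j = 0) ∧
      (∀ j, u j = ∑ i, lam i * (w i j : ℚ)) ∧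
      LinearIndependent ℚ (fun i => fun j => (w i j : ℚ)) by
    exact H (suppF u).card u le_rfl huk
  intro N
  induction N with
  | zero =>
    intro u hcard _
    have hu0 : u = 0 := by
      funext j
      rw [Pi.zero_apply]
      by_contra hj
      have := Finset.card_ne_zero_of_mem (mem_suppF.mpr hj)
      omega
    exact ⟨0, Fin.elim0, Fin.elim0, fun i => i.elim0, fun i => i.elim0, fun i => i.elim0,
      fun i => i.elim0, fun i => i.elim0, fun j => by simp [hu0], linearIndependent_empty_type⟩
  | succ N ih =>
    intro u hcard huk
    by_cases hu0 : u = 0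
    · exact ⟨0, Fin.elim0, Fin.elim0, fun i => i.elim0, fun i => i.elim0, fun i => i.elim0,
        fun i => i.elim0, fun i => i.elim0, fun j => by simp [hu0], linearIndependent_empty_type⟩
    obtain ⟨w0, hw00, hw0supp, hw0sign, hw0ker, hw0norm⟩ :=
      exists_signcompat_circuit A r hr Δ hΔ u hu0 huk
    set T : Finset (Fin n) := Finset.univ.filter (fun j => w0 j ≠ 0) with hT
    have hTne : T.Nonempty := by
      obtain ⟨j1, hj1⟩ : ∃ j1, w0 j1 ≠ 0 := by
        by_contra h; push_neg at h; exact hw00 (funext h)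
      exact ⟨j1, by rw [hT, Finset.mem_filter]; exact ⟨Finset.mem_univ _, hj1⟩⟩
    have hTprod : ∀ j ∈ T, 0 < (w0 j : ℚ) * u j := by
      intro j hj
      rw [hT, Finset.mem_filter] at hj
      have hwj : (w0 j : ℚ) ≠ 0 := Int.cast_ne_zero.mpr hj.2
      have huj : u j ≠ 0 := by
        intro h; exact hj.2 (hw0supp j h)
      rcases (hw0sign j).lt_or_eq with h | h
      · exact h
      · exact absurd h.symm (mul_ne_zero hwj huj)
    obtain ⟨jmin, hjminT, hjmin⟩ := Finset.exists_min_image T (fun j => u j / (w0 j : ℚ)) hTne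
    have hw0jmin : (w0 jmin : ℚ) ≠ 0 := by
      rw [hT, Finset.mem_filter] at hjminT
      exact Int.cast_ne_zero.mpr hjminT.2
    set lam0 : ℚ := u jmin / (w0 jmin : ℚ) with hlam0
    have hlam0pos : 0 < lam0 := by
      rw [hlam0]
      apply div_pos_iff.mpr
      have := hTprod jmin hjminT
      rcases lt_trichotomy ((w0 jmin : ℚ)) 0 with h | h | h
      · right; constructor <;> nlinarith
      · exact absurd h hw0jmin
      · left; constructor <;> nlinarith
    set u' : Fin n → ℚ := fun j => u j - lam0 * (w0 j : ℚ) with hu'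
    have hu'k : (A.map (Int.cast : ℤ → ℚ)).mulVec u' = 0 := by
      have heq : u' = u - lam0 • (fun j => (w0 j : ℚ)) := by
        funext j; simp [hu', smul_eq_mul]
      have hwcast : (A.map (Int.cast : ℤ → ℚ)).mulVec (fun j => (w0 j : ℚ)) = 0 :=
        (mulVec_cast_eq_zero (A := A)).mp hw0ker
      rw [heq, Matrix.mulVec_sub, Matrix.mulVec_smul, huk, hwcast, smul_zero, sub_zero]
    have hsupp' : ∀ j, u j = 0 → u' j = 0 := by
      intro j hj
      have : w0 j = 0 := hw0supp j hj
      simp [hu', hj, this]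
    have hjmin0 : u' jmin = 0 := by
      simp only [hu', hlam0]
      field_simp
      ring
    have hkey : ∀ j, u' j ≠ 0 → 0 < u' j * u j := by
      intro j hj
      by_cases hje : u j = 0
      · exact absurd (hsupp' j hje) hj
      by_cases hwj : w0 j = 0
      · have : u' j = u j := by simp [hu', hwj]
        rw [this]
        rcases lt_or_gt_of_ne hje with h | h <;> nlinarith
      · have hjT : j ∈ T := by rw [hT, Finset.mem_filter]; exact ⟨Finset.mem_univ _, hwj⟩
        have hprod := hTprod j hjT
        have hle : lam0 ≤ u j / (w0 j : ℚ) := hjmin j hjT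
        have hwj0 : (w0 j : ℚ) ≠ 0 := Int.cast_ne_zero.mpr hwj
        have h1 : 0 ≤ u' j * u j := by
          have h2 : u' j * u j = u j * u j - lam0 * ((w0 j : ℚ) * u j) := by
            simp only [hu']; ring
          rw [h2]
          have h3 : lam0 * ((w0 j : ℚ) * u j) ≤ (u j / (w0 j : ℚ)) * ((w0 j : ℚ) * u j) :=
            mul_le_mul_of_nonneg_right hle hprod.le
          have h4 : (u j / (w0 j : ℚ)) * ((w0 j : ℚ) * u j) = u j * u j := by
            field_simp
          nlinarith
        rcases h1.lt_or_eq with h | h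
        · exact h
        · exfalso
          rcases mul_eq_zero.mp h.symm with h5 | h5
          · exact hj h5
          · exact hje h5
    have hsubset : suppF u' ⊂ suppF u := by
      constructor
      · intro j hj
        rw [mem_suppF] at *
        intro h
        exact hj (hsupp' j h)
      · intro h
        have hjmem : jmin ∈ suppF u := by
          rw [mem_suppF]
          intro h2
          have := hTprod jmin hjminT
          rw [h2, mul_zero] at this
          exact absurd this (lt_irrefl 0)
        have := h hjmem
        rw [mem_suppF] at this
        exact this hjmin0
    have hcard' : (suppF u').card ≤ N := by
      have := Finset.card_lt_card hsubset
      omega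
    obtain ⟨k', lam', w', hl'pos, hw'ker, hw'norm, hw'sign, hw'supp, hw'sum, hw'ind⟩ :=
      ih u' hcard' hu'k
    refine ⟨k' + 1, Fin.cons lam0 lam', Fin.cons w0 w', ?_, ?_, ?_, ?_, ?_, ?_, ?_⟩
    · intro i
      refine Fin.cases ?_ ?_ i
      · rw [Fin.cons_zero]; exact hlam0pos
      · intro i'; rw [Fin.cons_succ]; exact hl'pos i'
    · intro i
      refine Fin.cases ?_ ?_ i
      · rw [Fin.cons_zero]; exact hw0ker
      · intro i'; rw [Fin.cons_succ]; exact hw'ker i'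
    · intro i
      refine Fin.cases ?_ ?_ i
      · rw [Fin.cons_zero]; exact hw0norm
      · intro i'; rw [Fin.cons_succ]; exact hw'norm i'
    · intro i j
      refine Fin.cases ?_ ?_ i
      · rw [Fin.cons_zero]; exact hw0sign j
      · intro i'
        rw [Fin.cons_succ]
        by_cases h : w' i' j = 0
        · rw [h]; simp
        · have hu'j : u' j ≠ 0 := fun h2 => h (hw'supp i' j h2)
          exact sign_trans (hw'sign i' j) (hkey j hu'j)
    · intro i j hj
      refine Fin.cases ?_ ?_ i
      · rw [Fin.cons_zero]; exact hw0supp j hj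
      · intro i'; rw [Fin.cons_succ]; exact hw'supp i' j (hsupp' j hj)
    · intro j
      rw [Fin.sum_univ_succ]
      simp only [Fin.cons_zero, Fin.cons_succ]
      have := hw'sum j
      simp only [hu'] at this
      linarith [this]
    · have hfam : (fun i : Fin (k' + 1) => fun j =>
            (((Fin.cons w0 w' : Fin (k' + 1) → Fin n → ℤ) i j : ℤ) : ℚ))
          = Fin.cons (fun j => ((w0 j : ℤ) : ℚ)) (fun i => fun j => ((w' i j : ℤ) : ℚ)) := by
        funext i
        refine Fin.cases ?_ ?_ i
        · rw [Fin.cons_zero, Fin.cons_zero]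
        · intro i'; rw [Fin.cons_succ, Fin.cons_succ]
      rw [hfam]
      apply hw'ind.fin_cons
      intro hmem
      have hspan : Submodule.span ℚ (Set.range (fun i => fun j => ((w' i j : ℤ) : ℚ)))
          ≤ LinearMap.ker (LinearMap.proj (R := ℚ) (φ := fun _ : Fin n => ℚ) jmin) := by
        rw [Submodule.span_le]
        rintro - ⟨i', rfl⟩
        rw [SetLike.mem_coe, LinearMap.mem_ker]
        show ((w' i' jmin : ℤ) : ℚ) = 0
        rw [hw'supp i' jmin hjmin0]
        simp
      have := hspan hmem
      rw [LinearMap.mem_ker] at this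
      have h2 : ((w0 jmin : ℤ) : ℚ) = 0 := this
      exact hw0jmin h2

/-- If `A ∈ ℤ^{m×n}` has rank `r` and all subdeterminants of `A` are
bounded in absolute value by `Δ`, then every Graver basis element `v` of `A`
satisfies `‖v‖₁ ≤ (n - r)(r + 1)Δ`. -/
theorem graver_l1_determinant_bound {m n : ℕ} (A : Matrix (Fin m) (Fin n) ℤ)
    (r : ℕ) (hr : A.rank = r) (Δ : ℤ)
    (hΔ : ∀ (k : ℕ) (f : Fin k ↪ Fin m) (g : Fin k ↪ Fin n),
      |(A.submatrix f g).det| ≤ Δ)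
    (v : Fin n → ℤ) (hv : IsGraver A v) :
    ∑ i, |v i| ≤ ((n : ℤ) - (r : ℤ)) * ((r : ℤ) + 1) * Δ := by
  classical
  obtain ⟨hv0, hvker, hvind⟩ := hv
  set F := A.map (Int.cast : ℤ → ℚ) with hF
  have hrn : r ≤ n := by
    have := Matrix.rank_le_width A
    omega
  have hΔ1 : (1 : ℤ) ≤ Δ := one_le_Delta hΔ
  have huk : F.mulVec (fun j => (v j : ℚ)) = 0 := (mulVec_cast_eq_zero (A := A)).mp hvker
  obtain ⟨k, lam, w, hlpos, hwker, hwnorm, hwsign, hwsupp, hwsum, hwind⟩ :=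
    graver_decomposition A r hr Δ hΔ (fun j => (v j : ℚ)) huk
  -- (beta reduction not needed)
  -- k ≤ n - r
  have hkn : k ≤ n - r := by
    have h1 : Module.finrank ℚ (span ℚ (Set.range (fun i => fun j => ((w i j : ℤ) : ℚ)))) = k := by
      rw [finrank_span_eq_card hwind, Fintype.card_fin]
    have h2 : span ℚ (Set.range (fun i => fun j => ((w i j : ℤ) : ℚ)))
        ≤ LinearMap.ker F.mulVecLin := by
      rw [Submodule.span_le]
      rintro - ⟨i, rfl⟩
      rw [SetLike.mem_coe, LinearMap.mem_ker, Matrix.mulVecLin_apply]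
      exact (mulVec_cast_eq_zero (A := A)).mp (hwker i)
    have h3 := Submodule.finrank_mono h2
    have h4 : F.rank + Module.finrank ℚ (LinearMap.ker F.mulVecLin) = n := by
      rw [Matrix.rank]
      have := LinearMap.finrank_range_add_finrank_ker F.mulVecLin
      rwa [Module.finrank_pi, Fintype.card_fin] at this
    have h5 : F.rank = r := by rw [hF, rank_map_ratCast, hr]
    omega
  -- the domination property
  have hstar : ∀ i j, lam i * |((w i j : ℤ) : ℚ)| ≤ |((v j : ℤ) : ℚ)| := by
    intro i j
    by_cases hvj : v j = 0
    · rw [hwsupp i j (by rw [hvj]; simp)]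
      simp
    have hterm : ∀ l, 0 ≤ lam l * (w l j : ℚ) * (v j : ℚ) := by
      intro l
      have h1 := hwsign l j
      have h2 := (hlpos l).le
      nlinarith
    have hsum : ∑ l, lam l * (w l j : ℚ) = (v j : ℚ) := (hwsum j).symm
    rcases lt_trichotomy ((v j : ℤ) : ℚ) 0 with hc | hc | hc
    · have hterm' : ∀ l, lam l * (w l j : ℚ) ≤ 0 := by
        intro l; nlinarith [hterm l]
      have hile : (v j : ℚ) ≤ lam i * (w i j : ℚ) := by
        have h6 := Finset.add_sum_erase Finset.univ (fun l => lam l * (w l j : ℚ))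
          (Finset.mem_univ i)
        have h7 : ∑ l ∈ Finset.univ.erase i, lam l * (w l j : ℚ) ≤ 0 :=
          Finset.sum_nonpos (fun l _ => hterm' l)
        rw [hsum] at h6
        linarith
      have hwle : (w i j : ℚ) ≤ 0 := by nlinarith [hterm' i, hlpos i]
      rw [abs_of_neg hc, abs_of_nonpos hwle]
      nlinarith [hile]
    · exact absurd (by exact_mod_cast hc) hvj
    · have hterm' : ∀ l, 0 ≤ lam l * (w l j : ℚ) := by
        intro l; nlinarith [hterm l]
      have hile : lam i * (w i j : ℚ) ≤ (v j : ℚ) := by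
        have h6 := Finset.add_sum_erase Finset.univ (fun l => lam l * (w l j : ℚ))
          (Finset.mem_univ i)
        have h7 : 0 ≤ ∑ l ∈ Finset.univ.erase i, lam l * (w l j : ℚ) :=
          Finset.sum_nonneg (fun l _ => hterm' l)
        rw [hsum] at h6
        linarith
      have hwge : 0 ≤ (w i j : ℚ) := by nlinarith [hterm' i, hlpos i]
      rw [abs_of_pos hc, abs_of_nonneg hwge]
      nlinarith [hile]
  -- each coefficient is at most 1, by the Graver property
  have hlam1 : ∀ i, lam i ≤ 1 := by
    intro i
    by_contra hgt
    push_neg at hgt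
    have hwi0 : w i ≠ 0 := by
      intro h
      apply hwind.ne_zero i
      funext j
      rw [congrFun h j]
      simp
    obtain ⟨j1, hj1⟩ : ∃ j1, w i j1 ≠ 0 := by
      by_contra h; push_neg at h; exact hwi0 (funext h)
    have hj1q : ((w i j1 : ℤ) : ℚ) ≠ 0 := Int.cast_ne_zero.mpr hj1
    have habs : ∀ j, |((w i j : ℤ) : ℚ)| ≤ |((v j : ℤ) : ℚ)| := by
      intro j
      have h1 := hstar i j
      have h2 := abs_nonneg ((w i j : ℤ) : ℚ)
      nlinarith [hgt]
    have hvne : v - w i ≠ 0 := by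
      intro h
      have hveq : v = w i := sub_eq_zero.mp h
      have h1 := hstar i j1
      rw [hveq] at h1
      have h2 : 0 < |((w i j1 : ℤ) : ℚ)| := abs_pos.mpr hj1q
      nlinarith [hgt]
    have hso1 : SameOrthant v (w i) := by
      intro j
      have h1 := hwsign i j
      have h2 : (0 : ℚ) ≤ (v j : ℚ) * (w i j : ℚ) := by linarith [mul_comm ((w i j : ℤ) : ℚ) ((v j : ℤ) : ℚ), h1]
      exact_mod_cast h2
    have hso2 : SameOrthant v (v - w i) := by
      intro j
      have h1 := habs j
      have h2 := hwsign i j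
      have hq : (0 : ℚ) ≤ (v j : ℚ) * ((v j : ℚ) - (w i j : ℚ)) := by
        rcases le_or_gt 0 ((v j : ℤ) : ℚ) with h | h
        · have h3 : (w i j : ℚ) ≤ (v j : ℚ) :=
            le_trans (le_abs_self _) (h1.trans_eq (abs_of_nonneg h))
          exact mul_nonneg h (by linarith)
        · have h3 : (v j : ℚ) ≤ (w i j : ℚ) := by
            have h4 := neg_abs_le ((w i j : ℤ) : ℚ)
            rw [abs_of_neg h] at h1
            linarith
          nlinarith
      have hz : (0 : ℤ) ≤ v j * (v j - w i j) := by exact_mod_cast hq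
      simpa using hz
    have hker2 : A.mulVec (v - w i) = 0 := by
      rw [Matrix.mulVec_sub, hvker, hwker i, sub_zero]
    exact hvind (w i) (v - w i) hwi0 hvne (hwker i) hker2 hso1 hso2 (by abel)
  -- final computation over ℚ
  set B : ℤ := ((r : ℤ) + 1) * Δ with hB
  have hBnnQ : (0 : ℚ) ≤ (B : ℚ) := by
    have : (0 : ℤ) ≤ B := by positivity
    exact_mod_cast this
  have hQ : ∑ j, |((v j : ℤ) : ℚ)| ≤ (k : ℚ) * (B : ℚ) := by
    have hstep : ∀ j, |((v j : ℤ) : ℚ)| ≤ ∑ i, lam i * |((w i j : ℤ) : ℚ)| := by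
      intro j
      calc |((v j : ℤ) : ℚ)| = |∑ i, lam i * (w i j : ℚ)| := by rw [← hwsum j]
        _ ≤ ∑ i, |lam i * (w i j : ℚ)| := Finset.abs_sum_le_sum_abs _ _
        _ = ∑ i, lam i * |((w i j : ℤ) : ℚ)| := by
            apply Finset.sum_congr rfl
            intro i _
            rw [abs_mul, abs_of_pos (hlpos i)]
    calc ∑ j, |((v j : ℤ) : ℚ)| ≤ ∑ j, ∑ i, lam i * |((w i j : ℤ) : ℚ)| :=
          Finset.sum_le_sum (fun j _ => hstep j)
      _ = ∑ i, ∑ j, lam i * |((w i j : ℤ) : ℚ)| := Finset.sum_comm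
      _ = ∑ i : Fin k, lam i * ∑ j, |((w i j : ℤ) : ℚ)| := by
          apply Finset.sum_congr rfl
          intro i _
          rw [Finset.mul_sum]
      _ ≤ ∑ _i : Fin k, (B : ℚ) := by
          apply Finset.sum_le_sum
          intro i _
          have hXB : ∑ j, |((w i j : ℤ) : ℚ)| ≤ (B : ℚ) := by
            have h1 : ((∑ j, |w i j| : ℤ) : ℚ) = ∑ j, |((w i j : ℤ) : ℚ)| := by
              push_cast
              rfl
            rw [← h1]
            exact_mod_cast hwnorm i
          have hXnn : (0 : ℚ) ≤ ∑ j, |((w i j : ℤ) : ℚ)| :=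
            Finset.sum_nonneg (fun j _ => abs_nonneg _)
          calc lam i * ∑ j, |((w i j : ℤ) : ℚ)| ≤ 1 * ∑ j, |((w i j : ℤ) : ℚ)| :=
                mul_le_mul_of_nonneg_right (hlam1 i) hXnn
            _ = ∑ j, |((w i j : ℤ) : ℚ)| := one_mul _
            _ ≤ (B : ℚ) := hXB
      _ = (k : ℚ) * (B : ℚ) := by
          rw [Finset.sum_const, Finset.card_univ, Fintype.card_fin, nsmul_eq_mul]
  have hZ : ∑ j, |v j| ≤ (k : ℤ) * B := by
    have h1 : ((∑ j, |v j| : ℤ) : ℚ) = ∑ j, |((v j : ℤ) : ℚ)| := by push_cast; rfl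
    have h2 : ((k : ℤ) : ℚ) * (B : ℚ) = (((k : ℤ) * B : ℤ) : ℚ) := by push_cast; ring
    have := hQ
    rw [← h1] at this
    have h3 : ((∑ j, |v j| : ℤ) : ℚ) ≤ (((k : ℤ) * B : ℤ) : ℚ) := by
      rw [← h2]
      exact_mod_cast this
    exact_mod_cast h3
  have hkZ : (k : ℤ) ≤ (n : ℤ) - (r : ℤ) := by
    have : (k : ℤ) ≤ ((n - r : ℕ) : ℤ) := by exact_mod_cast hkn
    rwa [Int.ofNat_sub hrn] at this
  have hBnn : (0 : ℤ) ≤ B := by positivity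
  calc ∑ j, |v j| ≤ (k : ℤ) * B := hZ
    _ ≤ ((n : ℤ) - (r : ℤ)) * B := mul_le_mul_of_nonneg_right hkZ hBnn
    _ = ((n : ℤ) - (r : ℤ)) * ((r : ℤ) + 1) * Δ := by rw [hB]; ring
end

section
/- Let f : R^n → R be separable convex, i.e., f(x) = Σ f_i(x_i) with each f_i : R → R convex. Let z ∈ R^n and let u^1, ..., u^k ∈ R^n lie pairwise in the same orthant (sign-compatible). Write r = z + Σ_{i} β_i u^i and w = z + Σ_i γ_i u^i for nonnegative reals β_i, γ_i, and s = z + Σ_i (β_i + γ_i) u^i. Then f(s) - f(z) ≥ [f(r) - f(z)] + [f(w) - f(z)] (superadditivity of separable convex functions along sign-compatible directions). -/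
lemma one_var_nonneg (g : ℝ → ℝ) (hg : ConvexOn ℝ Set.univ g) (z a b : ℝ)
    (ha : 0 ≤ a) (hb : 0 ≤ b) : g (z + a) + g (z + b) ≤ g z + g (z + a + b) := by
  rcases eq_or_lt_of_le (by positivity : (0:ℝ) ≤ a + b) with h | h
  · have ha0 : a = 0 := by linarith
    have hb0 : b = 0 := by linarith
    simp [ha0, hb0]
  · have hsum : (b/(a+b)) + (a/(a+b)) = 1 := by field_simp; ring
    have h1 : g (z + a) ≤ (b/(a+b)) * g z + (a/(a+b)) * g (z + a + b) := by
      have := hg.2 (Set.mem_univ z) (Set.mem_univ (z + a + b))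
        (by positivity : (0:ℝ) ≤ b/(a+b)) (by positivity : (0:ℝ) ≤ a/(a+b))
        hsum
      simpa [smul_eq_mul, show (b/(a+b)) * z + (a/(a+b)) * (z + a + b) = z + a by
        field_simp; ring] using this
    have h2 : g (z + b) ≤ (a/(a+b)) * g z + (b/(a+b)) * g (z + a + b) := by
      have := hg.2 (Set.mem_univ z) (Set.mem_univ (z + a + b))
        (by positivity : (0:ℝ) ≤ a/(a+b)) (by positivity : (0:ℝ) ≤ b/(a+b))
        (by linarith)
      simpa [smul_eq_mul, show (a/(a+b)) * z + (b/(a+b)) * (z + a + b) = z + b by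
        field_simp; ring] using this
    have e1 : (b/(a+b)) * g z + (a/(a+b)) * g z = g z := by
      rw [← add_mul, hsum, one_mul]
    have e2 : (a/(a+b)) * g (z+a+b) + (b/(a+b)) * g (z+a+b) = g (z+a+b) := by
      rw [← add_mul]; rw [show (a/(a+b)) + (b/(a+b)) = 1 by linarith, one_mul]
    linarith

lemma one_var (g : ℝ → ℝ) (hg : ConvexOn ℝ Set.univ g) (z a b : ℝ)
    (hab : 0 ≤ a * b) : g (z + a) + g (z + b) ≤ g z + g (z + a + b) := by
  rcases le_or_gt 0 a with ha | ha
  · rcases le_or_gt 0 b with hb | hb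
    · exact one_var_nonneg g hg z a b ha hb
    · have ha0 : a = 0 := by nlinarith
      simp [ha0]
  · have hb : b ≤ 0 := by nlinarith
    have := one_var_nonneg g hg (z + a + b) (-a) (-b) (by linarith) (by linarith)
    ring_nf at this ⊢
    linarith


/-- superadditivity of separable convex functions along
sign-compatible directions: if `f(x) = Σᵢ fᵢ(xᵢ)` with each `fᵢ` convex,
`u¹, …, u^k` lie pairwise in the same orthant, `β, γ ≥ 0`,
`r = z + Σ βᵢ uⁱ`, `w = z + Σ γᵢ uⁱ` and `s = z + Σ (βᵢ+γᵢ) uⁱ`, then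
`f(s) - f(z) ≥ [f(r) - f(z)] + [f(w) - f(z)]`. -/
theorem separable_convex_superadditive {n k : ℕ}
    (fi : Fin n → ℝ → ℝ) (hconv : ∀ i, ConvexOn ℝ Set.univ (fi i))
    (f : (Fin n → ℝ) → ℝ) (hf : ∀ x, f x = ∑ i, fi i (x i))
    (z : Fin n → ℝ) (u : Fin k → (Fin n → ℝ))
    (hu : ∀ a b : Fin k, ∀ i, 0 ≤ u a i * u b i)
    (β γ : Fin k → ℝ) (hβ : ∀ i, 0 ≤ β i) (hγ : ∀ i, 0 ≤ γ i) :
    (f (z + ∑ i, β i • u i) - f z) + (f (z + ∑ i, γ i • u i) - f z) ≤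
      f (z + ∑ i, (β i + γ i) • u i) - f z := by
  have key : ∀ i : Fin n,
      fi i (z i + (∑ j, β j • u j) i) + fi i (z i + (∑ j, γ j • u j) i) ≤
      fi i (z i) + fi i (z i + (∑ j, (β j + γ j) • u j) i) := by
    intro i
    have hA : (∑ j, β j • u j) i = ∑ j, β j * u j i := by
      simp [Finset.sum_apply]
    have hB : (∑ j, γ j • u j) i = ∑ j, γ j * u j i := by
      simp [Finset.sum_apply]
    have hC : (∑ j, (β j + γ j) • u j) i =
        (∑ j, β j * u j i) + (∑ j, γ j * u j i) := by
      simp [Finset.sum_apply, add_mul, Finset.sum_add_distrib]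
    rw [hA, hB, hC, ← add_assoc]
    apply one_var (fi i) (hconv i)
    -- sign compatibility
    by_cases hpos : ∀ j : Fin k, 0 ≤ u j i
    · have h1 : 0 ≤ ∑ j, β j * u j i :=
        Finset.sum_nonneg fun j _ => mul_nonneg (hβ j) (hpos j)
      have h2 : 0 ≤ ∑ j, γ j * u j i :=
        Finset.sum_nonneg fun j _ => mul_nonneg (hγ j) (hpos j)
      positivity
    · push_neg at hpos
      obtain ⟨j0, hj0⟩ := hpos
      have hneg : ∀ j : Fin k, u j i ≤ 0 := by
        intro j
        have := hu j0 j i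
        nlinarith
      have h1 : ∑ j, β j * u j i ≤ 0 :=
        Finset.sum_nonpos fun j _ => mul_nonpos_of_nonneg_of_nonpos (hβ j) (hneg j)
      have h2 : ∑ j, γ j * u j i ≤ 0 :=
        Finset.sum_nonpos fun j _ => mul_nonpos_of_nonneg_of_nonpos (hγ j) (hneg j)
      nlinarith
  have hsum2 : (∑ i, (fi i (z i + (∑ j, β j • u j) i) + fi i (z i + (∑ j, γ j • u j) i))) ≤
      ∑ i, (fi i (z i) + fi i (z i + (∑ j, (β j + γ j) • u j) i)) :=
    Finset.sum_le_sum fun i _ => key i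
  simp only [Finset.sum_add_distrib] at hsum2
  simp only [hf, Pi.add_apply]
  linarith
end
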